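/- There exists a constant C depending only on h such that for all integers m ≥ 1, ℓ ≥ 0 and 0 ≤ k ≤ 2^ℓ − 1 with 2^ℓ ≤ m, |(2/m)·Σ_{i=1}^{⌊m/2⌋} h_{ℓk}((2i−1)/m)² − ‖h‖²_{L²(ℝ)}| ≤ C·2^ℓ/m; that is, the Riemann sum of h_{ℓk}² over the even grid approximates ‖h_{ℓk}‖²_{L²} = ‖h‖²_{L²} with error of order 2^ℓ/m, uniformly in ℓ and k. -/

import Mathlib

open MeasureTheory Real
set_option maxHeartbeats 1000000

/-- `h_{ℓk}(t) := 2^{ℓ/2} h(2^ℓ t − k)`. -/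
noncomputable def hlk (h : ℝ → ℝ) (ℓ k : ℕ) (t : ℝ) : ℝ :=
  (2 : ℝ) ^ ((ℓ : ℝ) / 2) * h ((2 : ℝ) ^ ℓ * t - (k : ℝ))

/-- `h` admits the piecewise Lipschitz derivative `h'` (relative to a finite
partition of `[0,1]`, outside of which `h` vanishes). -/
def HasPiecewiseLipschitzDeriv (h h' : ℝ → ℝ) : Prop :=
  ∃ (N : ℕ) (t : ℕ → ℝ), 0 < N ∧ t 0 = 0 ∧ t N = 1 ∧
    (∀ i < N, t i < t (i + 1)) ∧
    (∀ i < N, ∀ x ∈ Set.Ioo (t i) (t (i + 1)), HasDerivAt h (h' x) x) ∧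
    (∀ i < N, ∃ K : NNReal, LipschitzOnWith K h' (Set.Ioo (t i) (t (i + 1))))

lemma aux_tmono (N : ℕ) (t : ℕ → ℝ) (hmono : ∀ i < N, t i < t (i + 1)) :
    ∀ j, j ≤ N → ∀ i, i ≤ j → t i ≤ t j := by
  intro j
  induction j with
  | zero => intro _ i hi; simp [Nat.le_zero.mp hi]
  | succ j ih =>
    intro hj i hi
    rcases Nat.lt_or_ge i (j + 1) with hlt | hge
    · exact le_trans (ih (by omega) i (by omega)) (le_of_lt (hmono j (by omega)))
    · have : i = j + 1 := by omega
      simp [this]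

lemma aux_locate (N : ℕ) (t : ℕ → ℝ) (ht0 : t 0 = 0) (htN : t N = 1)
    (a b : ℝ) (hb0 : 0 ≤ b) (ha1 : a ≤ 1)
    (havoid : ∀ j, j ≤ N → t j ∉ Set.Icc a b) :
    ∃ j, j < N ∧ t j < a ∧ b < t (j + 1) := by
  have h0a : t 0 < a := by
    by_contra hc
    push_neg at hc
    exact (havoid 0 (Nat.zero_le N)) ⟨hc, by rw [ht0]; exact hb0⟩
  set S := (Finset.range (N + 1)).filter (fun i => t i < a) with hS
  have hSne : S.Nonempty := ⟨0, by simp [hS, h0a]⟩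
  set j := S.max' hSne with hj
  have hjS : j ∈ S := S.max'_mem hSne
  have hjN : j ≤ N := by
    have := (Finset.mem_filter.mp hjS).1; simp at this; omega
  have hja : t j < a := (Finset.mem_filter.mp hjS).2
  have hjltN : j < N := by
    rcases Nat.lt_or_ge j N with hlt | hge
    · exact hlt
    · have hjN' : j = N := by omega
      rw [hjN', htN] at hja; linarith
  refine ⟨j, hjltN, hja, ?_⟩
  have hnot : a ≤ t (j + 1) := by
    by_contra hcon
    push_neg at hcon
    have hmem : j + 1 ∈ S := Finset.mem_filter.mpr ⟨Finset.mem_range.mpr (by omega), hcon⟩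
    have := S.le_max' _ hmem; omega
  have := havoid (j + 1) (by omega)
  rw [Set.mem_Icc] at this
  push_neg at this
  exact this hnot

lemma aux_card (S : Finset ℕ) (hne : S.Nonempty) (lo hi : ℝ)
    (hmem : ∀ i ∈ S, lo ≤ (i : ℝ) ∧ (i : ℝ) ≤ hi) : (S.card : ℝ) ≤ hi - lo + 1 := by
  set i₀ := S.min' hne with hi₀
  set i₁ := S.max' hne with hi₁
  have h01 : i₀ ≤ i₁ := S.min'_le _ (S.max'_mem hne)
  have hsub : S ⊆ Finset.Icc i₀ i₁ := fun i hi =>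
    Finset.mem_Icc.mpr ⟨S.min'_le i hi, S.le_max' i hi⟩
  have hcard : S.card ≤ i₁ + 1 - i₀ := by
    simpa [Nat.card_Icc] using Finset.card_le_card hsub
  have hlo := (hmem i₀ (S.min'_mem hne)).1
  have hhi := (hmem i₁ (S.max'_mem hne)).2
  have hcast : ((i₁ + 1 - i₀ : ℕ) : ℝ) = (i₁ : ℝ) + 1 - i₀ := by
    have h : i₀ ≤ i₁ + 1 := by omega
    push_cast [Nat.cast_sub h]
    ring
  calc (S.card : ℝ) ≤ ((i₁ + 1 - i₀ : ℕ) : ℝ) := by exact_mod_cast hcard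
    _ = (i₁ : ℝ) + 1 - i₀ := hcast
    _ ≤ hi - lo + 1 := by linarith

lemma aux_consts (h h' : ℝ → ℝ) (hsupp : ∀ x, x ∉ Set.Icc (0:ℝ) 1 → h x = 0)
    (hderiv : HasPiecewiseLipschitzDeriv h h') :
    ∃ (N : ℕ) (t : ℕ → ℝ) (B L : ℝ), 0 < N ∧ t 0 = 0 ∧ t N = 1 ∧
      (∀ i < N, t i < t (i + 1)) ∧
      (∀ i < N, ∀ x ∈ Set.Ioo (t i) (t (i + 1)), HasDerivAt h (h' x) x) ∧
      0 ≤ B ∧ 0 ≤ L ∧ (∀ x, |h x| ≤ B) ∧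
      (∀ j, j < N → ∀ x ∈ Set.Ioo (t j) (t (j + 1)), ∀ y ∈ Set.Ioo (t j) (t (j + 1)),
        |h x - h y| ≤ L * |x - y|) := by
  obtain ⟨N, t, hN, ht0, htN, hmono, hd, hlip⟩ := hderiv
  have tmono := aux_tmono N t hmono
  have htmem : ∀ j, j ≤ N → 0 ≤ t j ∧ t j ≤ 1 := fun j hj =>
    ⟨ht0 ▸ tmono j hj 0 (Nat.zero_le j), htN ▸ tmono N le_rfl j hj⟩
  have hsub01 : ∀ j, j < N → Set.Ioo (t j) (t (j + 1)) ⊆ Set.Icc (0:ℝ) 1 := by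
    intro j hj x hx
    have h1 := (htmem j (le_of_lt hj)).1
    have h2 := (htmem (j + 1) hj).2
    exact ⟨le_trans h1 (le_of_lt hx.1), le_trans (le_of_lt hx.2) h2⟩
  have piece : ∀ j, ∃ D : ℝ, 0 ≤ D ∧ (j < N →
      (∀ x ∈ Set.Ioo (t j) (t (j + 1)), |h x| ≤ D) ∧
      (∀ x ∈ Set.Ioo (t j) (t (j + 1)), ∀ y ∈ Set.Ioo (t j) (t (j + 1)),
        |h x - h y| ≤ D * |x - y|)) := by
    intro j
    by_cases hj : j < N
    · obtain ⟨K, hK⟩ := hlip j hj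
      set c : ℝ := (t j + t (j + 1)) / 2 with hc
      have htlt := hmono j hj
      have hcmem : c ∈ Set.Ioo (t j) (t (j + 1)) := ⟨by rw [hc]; linarith, by rw [hc]; linarith⟩
      have habs1 : ∀ x ∈ Set.Ioo (t j) (t (j + 1)), ∀ y ∈ Set.Ioo (t j) (t (j + 1)),
          |x - y| ≤ 1 := by
        intro x hx y hy
        have h1 := hsub01 j hj hx
        have h2 := hsub01 j hj hy
        rw [Set.mem_Icc] at h1 h2
        rw [abs_le]; constructor <;> linarith [h1.1, h1.2, h2.1, h2.2]
      set Db : ℝ := |h' c| + K with hDb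
      have hDb0 : 0 ≤ Db := by positivity
      have hbound' : ∀ x ∈ Set.Ioo (t j) (t (j + 1)), |h' x| ≤ Db := by
        intro x hx
        have hdist := hK.dist_le_mul x hx c hcmem
        rw [Real.dist_eq, Real.dist_eq] at hdist
        have h1 : |h' x| - |h' c| ≤ |h' x - h' c| := abs_sub_abs_le_abs_sub _ _
        have h2 : (K : ℝ) * |x - c| ≤ (K : ℝ) * 1 :=
          mul_le_mul_of_nonneg_left (habs1 x hx c hcmem) K.coe_nonneg
        rw [hDb]; linarith
      have hliph : ∀ x ∈ Set.Ioo (t j) (t (j + 1)), ∀ y ∈ Set.Ioo (t j) (t (j + 1)),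
          |h x - h y| ≤ Db * |x - y| := by
        intro x hx y hy
        have := Convex.norm_image_sub_le_of_norm_hasDerivWithin_le
          (f := h) (f' := h') (C := Db) (s := Set.Ioo (t j) (t (j + 1)))
          (fun z hz => (hd j hj z hz).hasDerivWithinAt) (fun z hz => hbound' z hz)
          (convex_Ioo _ _) hy hx
        simpa [Real.norm_eq_abs] using this
      refine ⟨|h c| + Db, by positivity, fun _ => ⟨?_, ?_⟩⟩
      · intro x hx
        have h1 := hliph x hx c hcmem
        have h2 : |h x| - |h c| ≤ |h x - h c| := abs_sub_abs_le_abs_sub _ _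
        have h3 : Db * |x - c| ≤ Db * 1 :=
          mul_le_mul_of_nonneg_left (habs1 x hx c hcmem) hDb0
        linarith
      · intro x hx y hy
        have h1 := hliph x hx y hy
        have h2 : Db * |x - y| ≤ (|h c| + Db) * |x - y| :=
          mul_le_mul_of_nonneg_right (by linarith [abs_nonneg (h c)]) (abs_nonneg _)
        linarith
    · exact ⟨0, le_rfl, fun hcon => absurd hcon hj⟩
  choose D hD using piece
  set L : ℝ := ∑ j ∈ Finset.range N, D j with hL
  have hL0 : 0 ≤ L := Finset.sum_nonneg fun j _ => (hD j).1
  have hDleL : ∀ j, j < N → D j ≤ L := fun j hj =>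
    Finset.single_le_sum (fun i _ => (hD i).1) (Finset.mem_range.mpr hj)
  set B : ℝ := L + ∑ j ∈ Finset.range (N + 1), |h (t j)| with hB
  have hsum0 : 0 ≤ ∑ j ∈ Finset.range (N + 1), |h (t j)| :=
    Finset.sum_nonneg fun j _ => abs_nonneg _
  have hB0 : 0 ≤ B := by rw [hB]; linarith
  have hglobal : ∀ x, |h x| ≤ B := by
    intro x
    by_cases hx01 : x ∈ Set.Icc (0:ℝ) 1
    · by_cases hxt : ∃ j, j ≤ N ∧ x = t j
      · obtain ⟨j, hj, rfl⟩ := hxt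
        have := Finset.single_le_sum (f := fun j => |h (t j)|)
          (fun i _ => abs_nonneg _) (Finset.mem_range.mpr (by omega : j < N + 1))
        rw [hB]; linarith
      · push_neg at hxt
        have havoid : ∀ j, j ≤ N → t j ∉ Set.Icc x x := by
          intro j hj hmem
          rw [Set.mem_Icc] at hmem
          exact hxt j hj (le_antisymm hmem.1 hmem.2)
        rw [Set.mem_Icc] at hx01
        obtain ⟨j, hjN, hja, hjb⟩ := aux_locate N t ht0 htN x x hx01.1 hx01.2 havoid
        have := ((hD j).2 hjN).1 x ⟨hja, hjb⟩
        rw [hB]; linarith [hDleL j hjN]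
    · rw [hsupp x hx01]; simpa using hB0
  refine ⟨N, t, B, L, hN, ht0, htN, hmono, hd, hB0, hL0, hglobal, fun j hj x hx y hy => ?_⟩
  exact le_trans (((hD j).2 hj).2 x hx y hy)
    (mul_le_mul_of_nonneg_right (hDleL j hj) (abs_nonneg _))

lemma aux_integrable (h : ℝ → ℝ) (hsupp : ∀ x, x ∉ Set.Icc (0:ℝ) 1 → h x = 0)
    (N : ℕ) (t : ℕ → ℝ) (ht0 : t 0 = 0) (htN : t N = 1)
    (hcont : ∀ i < N, ∀ x ∈ Set.Ioo (t i) (t (i + 1)), ContinuousAt h x)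
    (B : ℝ) (hB : ∀ x, |h x| ≤ B) :
    Integrable (fun x => (h x) ^ 2) := by
  set U : Set ℝ := Set.Iio 0 ∪ Set.Ioi 1 ∪ ⋃ (j : ℕ) (_ : j < N), Set.Ioo (t j) (t (j + 1))
    with hU
  have hUopen : IsOpen U := by
    refine ((isOpen_Iio.union isOpen_Ioi).union ?_)
    exact isOpen_iUnion fun j => isOpen_iUnion fun _ => isOpen_Ioo
  have hUc : Uᶜ ⊆ ⋃ j ∈ Finset.range (N + 1), ({t j} : Set ℝ) := by
    intro x hx
    simp only [hU, Set.mem_compl_iff, Set.mem_union, Set.mem_iUnion, Set.mem_Iio, Set.mem_Ioi,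
      not_or, not_exists, not_lt] at hx
    obtain ⟨⟨hx0, hx1⟩, hx2⟩ := hx
    simp only [Set.mem_iUnion, Finset.mem_range, Set.mem_singleton_iff]
    by_contra hxt
    push_neg at hxt
    have havoid : ∀ j, j ≤ N → t j ∉ Set.Icc x x := by
      intro j hj hmem
      rw [Set.mem_Icc] at hmem
      exact hxt j (by omega) (le_antisymm hmem.1 hmem.2)
    obtain ⟨j, hjN, hja, hjb⟩ := aux_locate N t ht0 htN x x hx0 hx1 havoid
    exact hx2 j hjN ⟨hja, hjb⟩
  have hUcnull : volume Uᶜ = 0 := by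
    refine measure_mono_null hUc ?_
    have hcnt : (⋃ j ∈ Finset.range (N + 1), ({t j} : Set ℝ)).Countable :=
      Set.Countable.biUnion (Finset.range (N + 1)).countable_toSet
        (fun j _ => Set.countable_singleton _)
    exact hcnt.measure_zero _
  have hcontU : ContinuousOn h U := by
    intro x hx
    apply ContinuousAt.continuousWithinAt
    rcases hx with (hx | hx) | hx
    · have hev : h =ᶠ[nhds x] (fun _ => 0) := by
        filter_upwards [Iio_mem_nhds hx] with y hy
        exact hsupp y (by simp only [Set.mem_Icc, not_and_or, not_le]; left; exact hy)
      exact hev.continuousAt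
    · have hev : h =ᶠ[nhds x] (fun _ => 0) := by
        filter_upwards [Ioi_mem_nhds hx] with y hy
        exact hsupp y (by simp only [Set.mem_Icc, not_and_or, not_le]; right; exact hy)
      exact hev.continuousAt
    · simp only [Set.mem_iUnion] at hx
      obtain ⟨j, hj, hxj⟩ := hx
      exact hcont j hj x hxj
  have hrestrict : volume.restrict U = volume :=
    Measure.restrict_eq_self_of_ae_mem (by rw [MeasureTheory.ae_iff]; exact hUcnull)
  have hmeas : AEMeasurable h := by
    have := hcontU.aemeasurable (μ := volume) hUopen.measurableSet
    rwa [hrestrict] at this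
  have hasm : AEStronglyMeasurable (fun x => (h x) ^ 2) volume :=
    (hmeas.pow_const 2).aestronglyMeasurable
  refine Integrable.mono' (g := (Set.Icc (0:ℝ) 1).indicator (fun _ => B ^ 2)) ?_ hasm ?_
  · exact (integrable_indicator_iff measurableSet_Icc).mpr
      ((integrableOn_const_iff (C := B ^ 2)).mpr (Or.inr measure_Icc_lt_top))
  · refine Filter.Eventually.of_forall fun x => ?_
    by_cases hx : x ∈ Set.Icc (0:ℝ) 1
    · rw [Set.indicator_of_mem hx, Real.norm_eq_abs, abs_pow]
      exact pow_le_pow_left₀ (abs_nonneg _) (hB x) 2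
    · rw [Set.indicator_of_notMem hx, hsupp x hx]
      simp

/-- Riemann-sum approximation of `‖h_{ℓk}‖²_{L²} = ‖h‖²_{L²(ℝ)}` over the even
grid: there is `C` depending only on `h` such that for all `m ≥ 1`, `ℓ ≥ 0`,
`0 ≤ k ≤ 2^ℓ − 1` with `2^ℓ ≤ m`,
`|(2/m) Σ_{i=1}^{⌊m/2⌋} h_{ℓk}((2i−1)/m)² − ‖h‖²_{L²(ℝ)}| ≤ C 2^ℓ/m`. -/
theorem hlk_riemann_sum_approx
    (h : ℝ → ℝ) (hsupp : ∀ t, t ∉ Set.Icc (0:ℝ) 1 → h t = 0)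
    (h' : ℝ → ℝ) (hderiv : HasPiecewiseLipschitzDeriv h h') :
    ∃ C : ℝ, 0 < C ∧ ∀ m ℓ k : ℕ, 1 ≤ m → k < 2 ^ ℓ → 2 ^ ℓ ≤ m →
      |(2 / (m : ℝ)) * ∑ i ∈ Finset.Icc 1 (m / 2),
          (hlk h ℓ k ((2 * (i : ℝ) - 1) / m)) ^ 2
        - ∫ t : ℝ, (h t) ^ 2| ≤ C * 2 ^ ℓ / m := by
  classical
  obtain ⟨N, t, B, L, hN, ht0, htN, hmono, hd, hB0, hL0, hB, hLip⟩ :=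
    aux_consts h h' hsupp hderiv
  have tmono := aux_tmono N t hmono
  have htmem : ∀ j, j ≤ N → 0 ≤ t j ∧ t j ≤ 1 := fun j hj =>
    ⟨ht0 ▸ tmono j hj 0 (Nat.zero_le j), htN ▸ tmono N le_rfl j hj⟩
  set f : ℝ → ℝ := fun x => (h x) ^ 2 with hf
  have hfint : Integrable f := aux_integrable h hsupp N t ht0 htN
    (fun i hi x hx => (hd i hi x hx).continuousAt) B hB
  have hfii : ∀ a b : ℝ, IntervalIntegrable f volume a b := fun a b => hfint.intervalIntegrable
  set M : ℝ := B ^ 2 with hM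
  have hM0 : 0 ≤ M := sq_nonneg B
  have hfbound : ∀ x, |f x| ≤ M := by
    intro x
    rw [hf, hM]
    simp only
    rw [abs_pow]
    exact pow_le_pow_left₀ (abs_nonneg _) (hB x) 2
  have hfnn : ∀ x, 0 ≤ f x := fun x => sq_nonneg _
  have hfzero : ∀ x, x ∉ Set.Icc (0:ℝ) 1 → f x = 0 := by
    intro x hx
    rw [hf]
    simp only
    rw [hsupp x hx]
    ring
  set Lf : ℝ := 2 * B * L with hLf
  have hLf0 : 0 ≤ Lf := by positivity
  have hfLip : ∀ j, j < N → ∀ x ∈ Set.Ioo (t j) (t (j + 1)), ∀ y ∈ Set.Ioo (t j) (t (j + 1)),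
      |f x - f y| ≤ Lf * |x - y| := by
    intro j hj x hx y hy
    have h1 := hLip j hj x hx y hy
    have heq : f x - f y = (h x - h y) * (h x + h y) := by rw [hf]; ring
    rw [heq, abs_mul]
    have h2 : |h x + h y| ≤ 2 * B := le_trans (abs_add_le _ _) (by linarith [hB x, hB y])
    calc |h x - h y| * |h x + h y| ≤ (L * |x - y|) * (2 * B) :=
          mul_le_mul h1 h2 (abs_nonneg _) (by positivity)
      _ = Lf * |x - y| := by rw [hLf]; ring
  refine ⟨2 * (4 * ((N : ℝ) + 1) * M + 5 * Lf + M) + 1, by positivity, ?_⟩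
  intro m ℓ k hm hk hlm
  have hm0 : (0:ℝ) < m := by exact_mod_cast hm
  have hp0 : (0:ℝ) < 2 ^ ℓ := by positivity
  have hpm : (2:ℝ) ^ ℓ ≤ m := by exact_mod_cast hlm
  have hkp : (k:ℝ) + 1 ≤ 2 ^ ℓ := by exact_mod_cast hk
  have hk0 : (0:ℝ) ≤ k := Nat.cast_nonneg k
  set δ : ℝ := 2 * 2 ^ ℓ / m with hδ
  have hδ0 : 0 < δ := by positivity
  have hδ2 : δ ≤ 2 := by rw [hδ, div_le_iff₀ hm0]; linarith
  set n := m / 2 with hn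
  set a : ℕ → ℝ := fun i => δ * i - k with ha
  set s : ℕ → ℝ := fun i => δ * i - δ / 2 - k with hs
  have haeq : ∀ i : ℕ, a i = δ * i - k := fun i => rfl
  have hseq : ∀ i : ℕ, s i = δ * i - δ / 2 - k := fun i => rfl
  have hcell : ∀ i : ℕ, a (i + 1) - a i = δ := by
    intro i; rw [haeq, haeq]; push_cast; ring
  have hsmid : ∀ i : ℕ, s (i + 1) = a i + δ / 2 := by
    intro i; rw [hseq, haeq]; push_cast; ring
  have ha0 : a 0 = -(k:ℝ) := by rw [haeq]; push_cast; ring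
  clear_value f M Lf δ n a s
  -- zero integral helper
  have hzero_int : ∀ p q : ℝ, p ≤ q → (∀ x ∈ Set.Ioo p q, f x = 0) →
      ∫ x in p..q, f x = 0 := by
    intro p q hpq hz
    rw [intervalIntegral.integral_of_le hpq]
    have hae : ∀ᵐ x ∂(volume.restrict (Set.Ioc p q)), f x = 0 := by
      refine (ae_restrict_iff' measurableSet_Ioc).mpr ?_
      rw [MeasureTheory.ae_iff]
      refine measure_mono_null ?_ (measure_singleton q)
      intro x hx
      simp only [Set.mem_setOf_eq] at hx
      push_neg at hx
      obtain ⟨⟨hx1, hx2⟩, hx3⟩ := hx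
      rcases hx2.lt_or_eq with hlt | heq
      · exact absurd (hz x ⟨hx1, hlt⟩) hx3
      · simp [heq]
    exact integral_eq_zero_of_ae hae
  -- the Riemann sum
  have hsum : (2 / (m : ℝ)) * ∑ i ∈ Finset.Icc 1 n,
      (hlk h ℓ k ((2 * (i : ℝ) - 1) / m)) ^ 2 = ∑ i ∈ Finset.range n, δ * f (s (i + 1)) := by
    have hterm : ∀ i : ℕ, (2 / (m:ℝ)) * (hlk h ℓ k ((2 * (i:ℝ) - 1) / m)) ^ 2 = δ * f (s i) := by
      intro i
      simp only [hlk]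
      have hpow : ((2:ℝ) ^ ((ℓ:ℝ) / 2)) ^ 2 = (2:ℝ) ^ ℓ := by
        rw [← Real.rpow_natCast ((2:ℝ) ^ ((ℓ:ℝ) / 2)) 2,
          ← Real.rpow_mul (by norm_num : (0:ℝ) ≤ 2)]
        have he : ((ℓ:ℝ) / 2) * ((2:ℕ):ℝ) = (ℓ:ℝ) := by push_cast; ring
        rw [he, Real.rpow_natCast]
      have harg : (2:ℝ) ^ ℓ * ((2 * (i:ℝ) - 1) / m) - k = s i := by
        rw [hseq, hδ]
        field_simp
      rw [mul_pow, harg, hpow, hf]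
      simp only
      rw [hδ]
      ring
    rw [Finset.mul_sum, ← Finset.Ico_add_one_right_eq_Icc, Finset.sum_Ico_eq_sum_range]
    refine Finset.sum_congr (by norm_num) fun i _ => ?_
    rw [show i + 1 = 1 + i from by omega]
    exact hterm (1 + i)
  -- integral decomposition
  set v : ℝ := 2 ^ ℓ + 1 with hv
  have hv1 : (1:ℝ) ≤ v := by rw [hv]; linarith
  clear_value v
  have hnm : (n:ℝ) ≤ (m:ℝ) / 2 := by
    have h1 : 2 * n ≤ m := by omega
    have h2 := (Nat.cast_le (α := ℝ)).mpr h1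
    push_cast at h2
    linarith
  have hn2 : (m:ℝ) ≤ 2 * n + 1 := by
    have h1 : m ≤ 2 * n + 1 := by omega
    exact_mod_cast h1
  have han_v : a n ≤ v := by
    rw [haeq, hδ, hv]
    have h1 : 2 * (2:ℝ) ^ ℓ / m * n ≤ 2 * 2 ^ ℓ / m * ((m:ℝ) / 2) :=
      mul_le_mul_of_nonneg_left hnm (by positivity)
    have h2 : 2 * (2:ℝ) ^ ℓ / m * ((m:ℝ) / 2) = 2 ^ ℓ := by field_simp
    nlinarith
  have han_low : 1 - δ / 2 ≤ a n := by
    rw [haeq, hδ]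
    have h1 : 2 * (2:ℝ) ^ ℓ / m * ((m - 1) / 2) ≤ 2 * 2 ^ ℓ / m * n :=
      mul_le_mul_of_nonneg_left (by linarith) (by positivity)
    have h2 : 2 * (2:ℝ) ^ ℓ / m * ((m - 1) / 2) = 2 ^ ℓ - 2 ^ ℓ / m := by field_simp
    have h3 : (2 * (2:ℝ) ^ ℓ / m) / 2 = 2 ^ ℓ / m := by ring
    have h4 : (2:ℝ) ^ ℓ / m ≤ 2 ^ ℓ / m := le_rfl
    nlinarith [hkp]
  have hINT : ∫ x, f x = (∫ x in (a 0)..(a n), f x) + ∫ x in (a n)..v, f x := by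
    have hsupp_sub : Function.support f ⊆ Set.Ioc (-(k:ℝ) - 1) v := by
      intro x hx
      have hxI : x ∈ Set.Icc (0:ℝ) 1 := by
        by_contra hc
        exact hx (hfzero x hc)
      rw [Set.mem_Icc] at hxI
      constructor
      · linarith [hxI.1]
      · rw [hv]; linarith [hxI.2]
    have h0 : ∫ x, f x = ∫ x in (-(k:ℝ) - 1)..v, f x :=
      (intervalIntegral.integral_eq_integral_of_support_subset hsupp_sub).symm
    have e1 : (∫ x in (-(k:ℝ) - 1)..(a 0), f x) + (∫ x in (a 0)..(a n), f x)
        = ∫ x in (-(k:ℝ) - 1)..(a n), f x :=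
      intervalIntegral.integral_add_adjacent_intervals (hfii _ _) (hfii _ _)
    have e2 : (∫ x in (-(k:ℝ) - 1)..(a n), f x) + (∫ x in (a n)..v, f x)
        = ∫ x in (-(k:ℝ) - 1)..v, f x :=
      intervalIntegral.integral_add_adjacent_intervals (hfii _ _) (hfii _ _)
    have hleft : ∫ x in (-(k:ℝ) - 1)..(a 0), f x = 0 := by
      refine hzero_int _ _ (by rw [ha0]; linarith) ?_
      intro x hx
      rw [ha0] at hx
      refine hfzero x ?_
      rw [Set.mem_Icc]
      push_neg
      intro hx0
      exfalso
      linarith [hx.2]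
    rw [h0, ← e2, ← e1, hleft, zero_add]
  have htel : ∑ i ∈ Finset.range n, ∫ x in (a i)..(a (i + 1)), f x
      = ∫ x in (a 0)..(a n), f x :=
    intervalIntegral.sum_integral_adjacent_intervals (fun i _ => hfii _ _)
  have hright : |∫ x in (a n)..v, f x| ≤ M * (δ / 2) := by
    by_cases hcase : a n ≤ 1
    · have e3 : (∫ x in (a n)..(1:ℝ), f x) + (∫ x in (1:ℝ)..v, f x)
          = ∫ x in (a n)..v, f x :=
        intervalIntegral.integral_add_adjacent_intervals (hfii _ _) (hfii _ _)
      have hz : ∫ x in (1:ℝ)..v, f x = 0 := by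
        refine hzero_int 1 v hv1 fun x hx => hfzero x ?_
        rw [Set.mem_Icc]
        push_neg
        intro _
        exact hx.1
      have hbd := intervalIntegral.norm_integral_le_of_norm_le_const
        (a := a n) (b := (1:ℝ)) (C := M) (f := f)
        (fun x _ => by rw [Real.norm_eq_abs]; exact hfbound x)
      rw [Real.norm_eq_abs] at hbd
      have habs : |1 - a n| ≤ δ / 2 := by
        rw [abs_le]
        constructor
        · linarith [hδ0, hcase]
        · linarith [han_low]
      rw [← e3, hz, add_zero]
      calc |∫ x in (a n)..(1:ℝ), f x| ≤ M * |1 - a n| := hbd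
        _ ≤ M * (δ / 2) := mul_le_mul_of_nonneg_left habs hM0
    · push_neg at hcase
      have hz : ∫ x in (a n)..v, f x = 0 := by
        refine hzero_int _ _ han_v fun x hx => hfzero x ?_
        rw [Set.mem_Icc]
        push_neg
        intro _
        linarith [hx.1]
      rw [hz]
      simp only [abs_zero]
      positivity
  -- per-cell bound
  set bad : ℕ → Prop := fun i => ∃ j, j ≤ N ∧ t j ∈ Set.Icc (a i) (a (i + 1)) with hbad
  set meets : ℕ → Prop := fun i => a i ≤ 1 ∧ 0 ≤ a (i + 1) with hmeets
  have hEbound : ∀ i : ℕ, |δ * f (s (i + 1)) - ∫ x in (a i)..(a (i + 1)), f x| ≤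
      (if bad i then 2 * δ * M else 0) + (if meets i then Lf * δ ^ 2 else 0) := by
    intro i
    have haii : a i ≤ a (i + 1) := by linarith [hcell i, hδ0]
    have hsi1 : s (i + 1) = a i + δ / 2 := hsmid i
    have hIbound : |∫ x in (a i)..(a (i + 1)), f x| ≤ δ * M := by
      have hbd := intervalIntegral.norm_integral_le_of_norm_le_const
        (a := a i) (b := a (i + 1)) (C := M) (f := f)
        (fun x _ => by rw [Real.norm_eq_abs]; exact hfbound x)
      rw [Real.norm_eq_abs] at hbd
      calc |∫ x in (a i)..(a (i + 1)), f x| ≤ M * |a (i + 1) - a i| := hbd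
        _ = δ * M := by rw [hcell i, abs_of_pos hδ0]; ring
    have hite2 : (0:ℝ) ≤ (if meets i then Lf * δ ^ 2 else 0) := by
      split_ifs
      · positivity
      · exact le_refl 0
    by_cases hbadi : bad i
    · rw [if_pos hbadi]
      have h1 : |δ * f (s (i + 1))| ≤ δ * M := by
        rw [abs_mul, abs_of_pos hδ0]
        exact mul_le_mul_of_nonneg_left (hfbound _) hδ0.le
      have h2 : |δ * f (s (i + 1)) - ∫ x in (a i)..(a (i + 1)), f x|
          ≤ |δ * f (s (i + 1))| + |∫ x in (a i)..(a (i + 1)), f x| := by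
        rw [sub_eq_add_neg]
        exact le_trans (abs_add_le _ _) (by rw [abs_neg])
      linarith [hite2]
    · rw [if_neg hbadi]
      simp only [hbad, not_exists, not_and] at hbadi
      by_cases hc0 : a (i + 1) < 0
      · have hfs : f (s (i + 1)) = 0 := by
          refine hfzero _ ?_
          rw [Set.mem_Icc]
          push_neg
          intro h0
          exfalso
          rw [hsi1] at h0
          linarith [hcell i]
        have hIz : ∫ x in (a i)..(a (i + 1)), f x = 0 := by
          refine hzero_int _ _ haii fun x hx => hfzero x ?_
          rw [Set.mem_Icc]
          push_neg
          intro h0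
          exfalso
          linarith [hx.2]
        rw [hfs, hIz]
        simp only [mul_zero, sub_zero, abs_zero]
        linarith [hite2]
      by_cases hc1 : 1 < a i
      · have hfs : f (s (i + 1)) = 0 := by
          refine hfzero _ ?_
          rw [Set.mem_Icc]
          push_neg
          intro _
          rw [hsi1]
          linarith
        have hIz : ∫ x in (a i)..(a (i + 1)), f x = 0 := by
          refine hzero_int _ _ haii fun x hx => hfzero x ?_
          rw [Set.mem_Icc]
          push_neg
          intro _
          linarith [hx.1]
        rw [hfs, hIz]
        simp only [mul_zero, sub_zero, abs_zero]
        linarith [hite2]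
      push_neg at hc0 hc1
      obtain ⟨j, hjN, hja, hjb⟩ := aux_locate N t ht0 htN (a i) (a (i + 1)) hc0 hc1 hbadi
      have hmi : meets i := by
        rw [hmeets]
        refine ⟨?_, ?_⟩
        · linarith [(htmem (j + 1) hjN).2]
        · linarith [(htmem j (le_of_lt hjN)).1]
      rw [if_pos hmi, zero_add]
      have hsm : s (i + 1) ∈ Set.Ioo (t j) (t (j + 1)) := by
        constructor
        · rw [hsi1]; linarith
        · rw [hsi1]; linarith [hcell i]
      have hdiff : δ * f (s (i + 1)) - ∫ x in (a i)..(a (i + 1)), f x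
          = ∫ x in (a i)..(a (i + 1)), (f (s (i + 1)) - f x) := by
        rw [intervalIntegral.integral_sub intervalIntegrable_const (hfii _ _),
          intervalIntegral.integral_const, smul_eq_mul, hcell i]
      rw [hdiff]
      have hbd := intervalIntegral.norm_integral_le_of_norm_le_const
        (a := a i) (b := a (i + 1)) (C := Lf * δ)
        (f := fun x => f (s (i + 1)) - f x) ?_
      · rw [Real.norm_eq_abs] at hbd
        calc |∫ x in (a i)..(a (i + 1)), (f (s (i + 1)) - f x)|
            ≤ Lf * δ * |a (i + 1) - a i| := hbd
          _ = Lf * δ ^ 2 := by rw [hcell i, abs_of_pos hδ0]; ring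
      · intro x hx
        rw [Set.uIoc_of_le haii] at hx
        have hxI : x ∈ Set.Ioo (t j) (t (j + 1)) :=
          ⟨lt_trans hja hx.1, lt_of_le_of_lt hx.2 hjb⟩
        rw [Real.norm_eq_abs]
        refine le_trans (hfLip j hjN _ hsm _ hxI) ?_
        refine mul_le_mul_of_nonneg_left ?_ hLf0
        rw [abs_le]
        constructor
        · rw [hsi1]; linarith [hx.2, hcell i, hδ0]
        · rw [hsi1]; linarith [hx.1, hδ0]
  -- cardinality bounds
  have hcard_bad : ((((Finset.range n).filter bad).card : ℝ)) ≤ 2 * ((N:ℝ) + 1) := by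
    have hsub : (Finset.range n).filter bad ⊆ (Finset.range (N + 1)).biUnion
        (fun j => (Finset.range n).filter (fun i => t j ∈ Set.Icc (a i) (a (i + 1)))) := by
      intro i hi
      rw [Finset.mem_filter] at hi
      obtain ⟨hi1, hi2⟩ := hi
      rw [hbad] at hi2
      obtain ⟨j, hjN, hmem⟩ := hi2
      exact Finset.mem_biUnion.mpr
        ⟨j, Finset.mem_range.mpr (by omega), Finset.mem_filter.mpr ⟨hi1, hmem⟩⟩
    have heach : ∀ j : ℕ,
        (((Finset.range n).filter (fun i => t j ∈ Set.Icc (a i) (a (i + 1)))).card) ≤ 2 := by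
      intro j
      set S := (Finset.range n).filter (fun i => t j ∈ Set.Icc (a i) (a (i + 1))) with hS
      rcases S.eq_empty_or_nonempty with hSe | hSne
      · rw [hSe]; simp
      · have hm' : ∀ i ∈ S, (t j + k) / δ - 1 ≤ (i:ℝ) ∧ (i:ℝ) ≤ (t j + k) / δ := by
          intro i hi
          rw [hS, Finset.mem_filter, Set.mem_Icc] at hi
          obtain ⟨-, h1, h2⟩ := hi
          rw [haeq] at h1
          rw [haeq] at h2
          push_cast at h2
          constructor
          · have h3 : t j + (k:ℝ) ≤ ((i:ℝ) + 1) * δ := by linarith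
            have h4 := (div_le_iff₀ hδ0).mpr h3
            linarith
          · have h3 : (i:ℝ) * δ ≤ t j + (k:ℝ) := by linarith
            have h4 := (le_div_iff₀ hδ0).mpr h3
            linarith
        have hc := aux_card S hSne _ _ hm'
        have hc2 : ((S.card : ℝ)) ≤ 2 := by linarith
        exact_mod_cast hc2
    calc (((Finset.range n).filter bad).card : ℝ)
        ≤ (((Finset.range (N + 1)).biUnion
            (fun j => (Finset.range n).filter (fun i => t j ∈ Set.Icc (a i) (a (i + 1))))).card : ℝ) := by
          exact_mod_cast Finset.card_le_card hsub
      _ ≤ ((∑ j ∈ Finset.range (N + 1),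
            ((Finset.range n).filter (fun i => t j ∈ Set.Icc (a i) (a (i + 1)))).card : ℕ) : ℝ) := by
          exact_mod_cast Finset.card_biUnion_le
      _ ≤ (((N + 1) * 2 : ℕ) : ℝ) := by
          have := Finset.sum_le_card_nsmul (Finset.range (N + 1))
            (fun j => ((Finset.range n).filter (fun i => t j ∈ Set.Icc (a i) (a (i + 1)))).card)
            2 (fun j _ => heach j)
          simp only [Finset.card_range, smul_eq_mul] at this
          exact_mod_cast this
      _ ≤ 2 * ((N:ℝ) + 1) := by push_cast; linarith
  have hcard_meets : ((((Finset.range n).filter meets).card : ℝ)) * δ ≤ 1 + 2 * δ := by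
    set S := (Finset.range n).filter meets with hS
    rcases S.eq_empty_or_nonempty with hSe | hSne
    · rw [hSe]
      simp only [Finset.card_empty, Nat.cast_zero, zero_mul]
      linarith
    · have hm' : ∀ i ∈ S, (k:ℝ) / δ - 1 ≤ (i:ℝ) ∧ (i:ℝ) ≤ (1 + (k:ℝ)) / δ := by
        intro i hi
        rw [hS, Finset.mem_filter] at hi
        have hi2 := hi.2
        rw [hmeets] at hi2
        obtain ⟨h1, h2⟩ := hi2
        rw [haeq] at h1
        rw [haeq] at h2
        push_cast at h2
        constructor
        · have h3 : (k:ℝ) ≤ ((i:ℝ) + 1) * δ := by linarith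
          have h4 := (div_le_iff₀ hδ0).mpr h3
          linarith
        · have h3 : (i:ℝ) * δ ≤ 1 + (k:ℝ) := by linarith
          have h4 := (le_div_iff₀ hδ0).mpr h3
          linarith
      have hc := aux_card S hSne _ _ hm'
      have hc1 : ((S.card : ℝ)) ≤ 1 / δ + 2 := by
        have he : (1 + (k:ℝ)) / δ - ((k:ℝ) / δ - 1) + 1 = 1 / δ + 2 := by
          field_simp
          ring
        linarith
      have h2 : ((S.card : ℝ)) * δ ≤ (1 / δ + 2) * δ :=
        mul_le_mul_of_nonneg_right hc1 hδ0.le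
      have h3 : (1 / δ + 2) * δ = 1 + 2 * δ := by
        field_simp
      linarith
  -- assemble
  have hmain : (2 / (m : ℝ)) * (∑ i ∈ Finset.Icc 1 n,
        (hlk h ℓ k ((2 * (i : ℝ) - 1) / m)) ^ 2) - ∫ x, f x
      = (∑ i ∈ Finset.range n, (δ * f (s (i + 1)) - ∫ x in (a i)..(a (i + 1)), f x))
        - ∫ x in (a n)..v, f x := by
    rw [hsum, hINT, Finset.sum_sub_distrib, htel]
    ring
  rw [hmain]
  have ht1 : |(∑ i ∈ Finset.range n, (δ * f (s (i + 1)) - ∫ x in (a i)..(a (i + 1)), f x))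
        - ∫ x in (a n)..v, f x|
      ≤ |∑ i ∈ Finset.range n, (δ * f (s (i + 1)) - ∫ x in (a i)..(a (i + 1)), f x)|
        + |∫ x in (a n)..v, f x| := by
    rw [sub_eq_add_neg]
    exact le_trans (abs_add_le _ _) (by rw [abs_neg])
  have ht2 : |∑ i ∈ Finset.range n, (δ * f (s (i + 1)) - ∫ x in (a i)..(a (i + 1)), f x)|
      ≤ ∑ i ∈ Finset.range n, |δ * f (s (i + 1)) - ∫ x in (a i)..(a (i + 1)), f x| :=
    Finset.abs_sum_le_sum_abs _ _
  have hsum2 : (∑ i ∈ Finset.range n, |δ * f (s (i + 1)) - ∫ x in (a i)..(a (i + 1)), f x|)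
      ≤ 2 * δ * M * ((((Finset.range n).filter bad).card : ℝ))
        + Lf * δ ^ 2 * ((((Finset.range n).filter meets).card : ℝ)) := by
    calc (∑ i ∈ Finset.range n, |δ * f (s (i + 1)) - ∫ x in (a i)..(a (i + 1)), f x|)
        ≤ ∑ i ∈ Finset.range n,
            ((if bad i then 2 * δ * M else 0) + (if meets i then Lf * δ ^ 2 else 0)) :=
          Finset.sum_le_sum fun i _ => hEbound i
      _ = 2 * δ * M * ((((Finset.range n).filter bad).card : ℝ))
          + Lf * δ ^ 2 * ((((Finset.range n).filter meets).card : ℝ)) := by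
          rw [Finset.sum_add_distrib]
          congr 1
          · rw [← Finset.sum_filter, Finset.sum_const, nsmul_eq_mul]
            ring
          · rw [← Finset.sum_filter, Finset.sum_const, nsmul_eq_mul]
            ring
  have hb1 : 2 * δ * M * ((((Finset.range n).filter bad).card : ℝ))
      ≤ 2 * δ * M * (2 * ((N:ℝ) + 1)) :=
    mul_le_mul_of_nonneg_left hcard_bad (by positivity)
  have hb2 : Lf * δ ^ 2 * ((((Finset.range n).filter meets).card : ℝ))
      = Lf * δ * (((((Finset.range n).filter meets).card : ℝ)) * δ) := by ring
  have hb3 : Lf * δ * (((((Finset.range n).filter meets).card : ℝ)) * δ)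
      ≤ Lf * δ * (1 + 2 * δ) :=
    mul_le_mul_of_nonneg_left hcard_meets (by positivity)
  have hb4 : Lf * δ * (1 + 2 * δ) ≤ Lf * δ * 5 :=
    mul_le_mul_of_nonneg_left (by linarith) (by positivity)
  have hδhalf : (2:ℝ) ^ ℓ / m = δ / 2 := by rw [hδ]; ring
  have hC : (2 * (4 * ((N : ℝ) + 1) * M + 5 * Lf + M) + 1) * 2 ^ ℓ / m
      = (2 * (4 * ((N : ℝ) + 1) * M + 5 * Lf + M) + 1) * (δ / 2) := by
    rw [mul_div_assoc, hδhalf]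
  rw [hC]
  have hMδ : 0 ≤ M * δ := mul_nonneg hM0 hδ0.le
  have efinal : 2 * δ * M * (2 * ((N:ℝ) + 1)) + Lf * δ * 5 + M * (δ / 2)
        + (δ / 2 + M * δ / 2)
      = (2 * (4 * ((N : ℝ) + 1) * M + 5 * Lf + M) + 1) * (δ / 2) := by ring
  linarith [ht1, ht2, hsum2, hb1, hb3, hb4, hright, hMδ, hδ0.le, hb2.le, hb2.ge, efinal]
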